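/- If the principal values the agent — E_π[S] ≥ E_π[O] for every finite decision problem O and option O ∈ O, for every selection S of agent-optimal options — then the principal totally trusts the agent: for all X and t with π([E_P(X) ≥ t]) > 0, E_π[X · 1_{[E_P(X)≥t]}] ≥ t · π([E_P(X) ≥ t]). -/

import Mathlib

/-- valuing implies total trust (converse direction of Dorst's theorem). -/
theorem stmt_4 {Ω : Type*} [Fintype Ω]
    (π : Ω → ℝ) (hπ : ∀ ω, 0 ≤ π ω) (hπ1 : ∑ ω, π ω = 1)
    (P : Ω → Ω → ℝ) (hP0 : ∀ ω ω', 0 ≤ P ω ω') (hP1 : ∀ ω, ∑ ω', P ω ω' = 1)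
    -- valuing: for every decision problem and every selection of agent-optimal
    -- options, delegation is weakly preferred to every option
    (hVal : ∀ (D : Finset (Ω → ℝ)), D.Nonempty →
      ∀ S : Ω → Ω → ℝ,
        (∀ ω, S ω ∈ D ∧ ∀ O ∈ D, ∑ ω', P ω ω' * O ω' ≤ ∑ ω', P ω ω' * S ω ω') →
        ∀ O ∈ D, ∑ ω, π ω * O ω ≤ ∑ ω, π ω * S ω ω) :
    ∀ (X : Ω → ℝ) (t : ℝ),
      0 < (∑ ω, if t ≤ ∑ ω', P ω ω' * X ω' then π ω else 0) →
      t * (∑ ω, if t ≤ ∑ ω', P ω ω' * X ω' then π ω else 0) ≤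
        ∑ ω, if t ≤ ∑ ω', P ω ω' * X ω' then π ω * X ω else 0 := by
  intro X t _
  have ht : ∀ ω, ∑ ω', P ω ω' * t = t := by
    intro ω; rw [← Finset.sum_mul, hP1, one_mul]
  have key := hVal {X, fun _ => t} ⟨X, by simp⟩
    (fun ω => if t ≤ ∑ ω', P ω ω' * X ω' then X else fun _ => t)
    (by
      intro ω
      refine ⟨?_, ?_⟩
      · by_cases h : t ≤ ∑ ω', P ω ω' * X ω' <;> simp [h]
      · intro O hO
        rcases Finset.mem_insert.mp hO with h' | h'
        · rw [h']
          by_cases h : t ≤ ∑ ω', P ω ω' * X ω' <;> simp [h, ht]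
          linarith [ht ω, le_of_not_ge h]
        · simp only [Finset.mem_singleton] at h'
          rw [h']
          by_cases h : t ≤ ∑ ω', P ω ω' * X ω' <;> simp [h, ht])
    (fun _ => t) (by simp)
  beta_reduce at key
  have hL : ∑ ω, π ω * (fun _ => t) ω = t := by
    simp only
    rw [← Finset.sum_mul, hπ1, one_mul]
  have hR : ∑ ω, π ω * (if t ≤ ∑ ω', P ω ω' * X ω' then X else fun _ => t) ω
      = (∑ ω, if t ≤ ∑ ω', P ω ω' * X ω' then π ω * X ω else 0)
        + (∑ ω, if t ≤ ∑ ω', P ω ω' * X ω' then 0 else π ω * t) := by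
    rw [← Finset.sum_add_distrib]
    refine Finset.sum_congr rfl fun ω _ => ?_
    by_cases h : t ≤ ∑ ω', P ω ω' * X ω' <;> simp [h]
  have hT : t = t * (∑ ω, if t ≤ ∑ ω', P ω ω' * X ω' then π ω else 0)
      + (∑ ω, if t ≤ ∑ ω', P ω ω' * X ω' then 0 else π ω * t) := by
    have h1 : ∑ ω, (t * (if t ≤ ∑ ω', P ω ω' * X ω' then π ω else 0)
        + (if t ≤ ∑ ω', P ω ω' * X ω' then 0 else π ω * t)) = ∑ ω, π ω * t := by
      refine Finset.sum_congr rfl fun ω _ => ?_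
      by_cases h : t ≤ ∑ ω', P ω ω' * X ω' <;> simp [h] <;> ring
    rw [Finset.mul_sum, ← Finset.sum_add_distrib, h1, ← Finset.sum_mul, hπ1, one_mul]
  rw [hL, hR] at key
  linarith
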